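/- Let D be a full pro-reflective subcategory of a category C and let J be a directed partially ordered set. Let X, Y be objects of C, let q = (q_μ) : Y → Y = (Y_μ, q_{μμ'}, M) be a D-expansion of Y, and let H = (H_μ) : X → S^J(Y) be a morphism of pro-Sh^J_{(C,D)}, i.e. a family of J-shape morphisms H_μ : X → Y_μ with H_μ = S^J(q_{μμ'}) ∘ H_{μ'} for all μ ≤ μ'. Then there exists a unique morphism F : X → Y of Sh^J_{(C,D)} such that H_μ = S^J(q_μ) ∘ F for every μ ∈ M. -/

import Mathlib

open CategoryTheory

universe t w v u

/-- An inverse system in a category `C` over a directed preordered index type `Λ`: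
objects `obj l` and bonding morphisms `bond : obj l' ⟶ obj l` for `l ≤ l'`. -/
structure InvSys (C : Type u) [Category.{v} C] (Λ : Type w) [Preorder Λ] where
  obj : Λ → C
  bond : ∀ {l l' : Λ}, l ≤ l' → (obj l' ⟶ obj l)
  bond_refl : ∀ l : Λ, bond (le_refl l) = 𝟙 (obj l)
  bond_comp : ∀ {l l' l'' : Λ} (h : l ≤ l') (h' : l' ≤ l''),
    bond h' ≫ bond h = bond (h.trans h')

variable {C : Type u} [Category.{v} C]

/-- `(f, F)` is a `J`-morphism of inverse systems `X → Y`. -/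
def IsJMor (J : Type t) [Preorder J] {Λ M : Type w} [Preorder Λ] [Preorder M]
    (X : InvSys C Λ) (Y : InvSys C M) (f : M → Λ)
    (F : ∀ μ : M, J → (X.obj (f μ) ⟶ Y.obj μ)) : Prop :=
  ∀ ⦃μ μ' : M⦄ (h : μ ≤ μ'), ∃ (l : Λ) (hl : f μ ≤ l) (hl' : f μ' ≤ l) (j : J),
    ∀ j' : J, j ≤ j' →
      X.bond hl ≫ F μ j' = X.bond hl' ≫ F μ' j' ≫ Y.bond h

/-- `(f, F)` is a commutative `J`-morphism: the defining equality holds for every `j ∈ J`. -/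
def IsCommJMor (J : Type t) [Preorder J] {Λ M : Type w} [Preorder Λ] [Preorder M]
    (X : InvSys C Λ) (Y : InvSys C M) (f : M → Λ)
    (F : ∀ μ : M, J → (X.obj (f μ) ⟶ Y.obj μ)) : Prop :=
  ∀ ⦃μ μ' : M⦄ (h : μ ≤ μ'), ∃ (l : Λ) (hl : f μ ≤ l) (hl' : f μ' ≤ l),
    ∀ j : J, X.bond hl ≫ F μ j = X.bond hl' ≫ F μ' j ≫ Y.bond h

/-- A bundled `J`-morphism of inverse systems. -/
structure JMor (J : Type t) [Preorder J] {Λ M : Type w} [Preorder Λ] [Preorder M]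
    (X : InvSys C Λ) (Y : InvSys C M) where
  idx : M → Λ
  app : ∀ μ : M, J → (X.obj (idx μ) ⟶ Y.obj μ)
  cond : IsJMor J X Y idx app

/-- The equivalence relation `∼` on `J`-morphisms `X → Y`. -/
def JMorEquiv (J : Type t) [Preorder J] {Λ M : Type w} [Preorder Λ] [Preorder M]
    (X : InvSys C Λ) (Y : InvSys C M) (f g : JMor J X Y) : Prop :=
  ∀ μ : M, ∃ (l : Λ) (hl : f.idx μ ≤ l) (hl' : g.idx μ ≤ l) (j : J),
    ∀ j' : J, j ≤ j' → X.bond hl ≫ f.app μ j' = X.bond hl' ≫ g.app μ j'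
/-- Composition of `J`-morphisms: `(f.comp g) = (f ∘ g, g_ν^j ∘ f_{g(ν)}^j)`. -/
def JMor.comp (J : Type t) [Preorder J] [IsDirected J (· ≤ ·)]
    {Λ M N : Type w} [Preorder Λ] [IsDirected Λ (· ≤ ·)]
    [Preorder M] [IsDirected M (· ≤ ·)] [Preorder N]
    {X : InvSys C Λ} {Y : InvSys C M} {Z : InvSys C N}
    (f : JMor J X Y) (g : JMor J Y Z) : JMor J X Z where
  idx := f.idx ∘ g.idx
  app := fun ν j => f.app (g.idx ν) j ≫ g.app ν j
  cond := by
    intro ν ν' h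
    obtain ⟨μ, hμ, hμ', j₀, e₀⟩ := g.cond h
    obtain ⟨l₁, h₁a, h₁b, j₁, e₁⟩ := f.cond hμ
    obtain ⟨l₂, h₂a, h₂b, j₂, e₂⟩ := f.cond hμ'
    obtain ⟨l, hl₁, hl₂⟩ := directed_of (· ≤ ·) l₁ l₂
    obtain ⟨ja, hja₀, hja₁⟩ := directed_of (· ≤ ·) j₀ j₁
    obtain ⟨j, hj, hj₂⟩ := directed_of (· ≤ ·) ja j₂
    refine ⟨l, h₁a.trans hl₁, h₂a.trans hl₂, j, fun j' hj' => ?_⟩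
    have E0 := e₀ j' ((hja₀.trans hj).trans hj')
    have E1 := e₁ j' ((hja₁.trans hj).trans hj')
    have E2 := e₂ j' (hj₂.trans hj')
    calc X.bond (h₁a.trans hl₁) ≫ f.app (g.idx ν) j' ≫ g.app ν j'
        = X.bond hl₁ ≫ (X.bond h₁a ≫ f.app (g.idx ν) j') ≫ g.app ν j' := by
          rw [← X.bond_comp h₁a hl₁]; simp only [Category.assoc]
      _ = X.bond hl₁ ≫ (X.bond h₁b ≫ f.app μ j' ≫ Y.bond hμ) ≫ g.app ν j' := by rw [E1]
      _ = X.bond (h₁b.trans hl₁) ≫ f.app μ j' ≫ Y.bond hμ ≫ g.app ν j' := by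
          rw [← X.bond_comp h₁b hl₁]; simp only [Category.assoc]
      _ = X.bond (h₂b.trans hl₂) ≫ f.app μ j' ≫ Y.bond hμ' ≫ g.app ν' j' ≫ Z.bond h := by
          rw [E0]
      _ = X.bond hl₂ ≫ (X.bond h₂b ≫ f.app μ j' ≫ Y.bond hμ') ≫ g.app ν' j' ≫ Z.bond h := by
          rw [← X.bond_comp h₂b hl₂]; simp only [Category.assoc]
      _ = X.bond hl₂ ≫ (X.bond h₂a ≫ f.app (g.idx ν') j') ≫ g.app ν' j' ≫ Z.bond h := by
          rw [E2]
      _ = X.bond (h₂a.trans hl₂) ≫ (f.app (g.idx ν') j' ≫ g.app ν' j') ≫ Z.bond h := by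
          rw [← X.bond_comp h₂a hl₂]; simp only [Category.assoc]

/-- The identity `J`-morphism. -/
def JMor.id (J : Type t) [Preorder J] [Nonempty J] {Λ : Type w} [Preorder Λ]
    (X : InvSys C Λ) : JMor J X X where
  idx := _root_.id
  app := fun l _ => 𝟙 (X.obj l)
  cond := by
    intro l l' h
    exact ⟨l', h, le_refl _, Classical.arbitrary J, fun j _ => by
      simp [X.bond_refl]⟩

/-- The setoid of `J`-morphisms `X → Y` under the relation `∼`. -/
instance jmorSetoid (J : Type t) [Preorder J] [IsDirected J (· ≤ ·)] [Nonempty J]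
    {Λ M : Type w} [Preorder Λ] [IsDirected Λ (· ≤ ·)] [Preorder M]
    (X : InvSys C Λ) (Y : InvSys C M) : Setoid (JMor J X Y) :=
  ⟨JMorEquiv J X Y, by
    constructor
    · intro f μ
      exact ⟨f.idx μ, le_refl _, le_refl _, Classical.arbitrary J, fun j _ => rfl⟩
    · intro f g hfg μ
      obtain ⟨l, hl, hl', j, e⟩ := hfg μ
      exact ⟨l, hl', hl, j, fun j' hj => (e j' hj).symm⟩
    · intro f g k hfg hgk μ
      obtain ⟨l₁, h₁, h₁', j₁, e₁⟩ := hfg μ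
      obtain ⟨l₂, h₂, h₂', j₂, e₂⟩ := hgk μ
      obtain ⟨l, hl₁, hl₂⟩ := directed_of (· ≤ ·) l₁ l₂
      obtain ⟨j, hj₁, hj₂⟩ := directed_of (· ≤ ·) j₁ j₂
      refine ⟨l, h₁.trans hl₁, h₂'.trans hl₂, j, fun j' hj => ?_⟩
      calc X.bond (h₁.trans hl₁) ≫ f.app μ j'
          = X.bond hl₁ ≫ X.bond h₁ ≫ f.app μ j' := by
            rw [← Category.assoc, X.bond_comp]
        _ = X.bond hl₁ ≫ X.bond h₁' ≫ g.app μ j' := by rw [e₁ j' (hj₁.trans hj)]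
        _ = X.bond (h₁'.trans hl₁) ≫ g.app μ j' := by
            rw [← Category.assoc, X.bond_comp]
        _ = X.bond hl₂ ≫ X.bond h₂ ≫ g.app μ j' := by
            rw [← Category.assoc, X.bond_comp]
        _ = X.bond hl₂ ≫ X.bond h₂' ≫ k.app μ j' := by rw [e₂ j' (hj₂.trans hj)]
        _ = X.bond (h₂'.trans hl₂) ≫ k.app μ j' := by
            rw [← Category.assoc, X.bond_comp]⟩

/-- The relation `∼` is compatible with composition. -/
theorem jmorEquiv_comp_congr (J : Type t) [Preorder J] [IsDirected J (· ≤ ·)] [Nonempty J]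
    {Λ M N : Type w} [Preorder Λ] [IsDirected Λ (· ≤ ·)]
    [Preorder M] [IsDirected M (· ≤ ·)] [Preorder N]
    {X : InvSys C Λ} {Y : InvSys C M} {Z : InvSys C N}
    {f f' : JMor J X Y} {g g' : JMor J Y Z}
    (hf : JMorEquiv J X Y f f') (hg : JMorEquiv J Y Z g g') :
    JMorEquiv J X Z (JMor.comp J f g) (JMor.comp J f' g') := by
  refine (jmorSetoid J X Z).iseqv.trans (y := JMor.comp J f' g) ?_ ?_
  · -- f ∼ f' ⇒ f.comp g ∼ f'.comp g
    intro ν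
    obtain ⟨l, hl, hl', j, e⟩ := hf (g.idx ν)
    exact ⟨l, hl, hl', j, fun j' hj => by
      show X.bond hl ≫ f.app (g.idx ν) j' ≫ g.app ν j'
          = X.bond hl' ≫ f'.app (g.idx ν) j' ≫ g.app ν j'
      rw [← Category.assoc, e j' hj, Category.assoc]⟩
  · -- g ∼ g' ⇒ f'.comp g ∼ f'.comp g'
    intro ν
    obtain ⟨μ, hμ, hμ', j₁, e₁⟩ := hg ν
    obtain ⟨l₁, ha, hb, j₂, e₂⟩ := f'.cond hμ
    obtain ⟨l₂, hc, hd, j₃, e₃⟩ := f'.cond hμ'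
    obtain ⟨l, hl₁, hl₂⟩ := directed_of (· ≤ ·) l₁ l₂
    obtain ⟨ja, hja₁, hja₂⟩ := directed_of (· ≤ ·) j₁ j₂
    obtain ⟨j, hj, hj₃⟩ := directed_of (· ≤ ·) ja j₃
    refine ⟨l, ha.trans hl₁, hc.trans hl₂, j, fun j' hj' => ?_⟩
    have E1 := e₁ j' ((hja₁.trans hj).trans hj')
    have E2 := e₂ j' ((hja₂.trans hj).trans hj')
    have E3 := e₃ j' (hj₃.trans hj')
    show X.bond (ha.trans hl₁) ≫ f'.app (g.idx ν) j' ≫ g.app ν j'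
        = X.bond (hc.trans hl₂) ≫ f'.app (g'.idx ν) j' ≫ g'.app ν j'
    calc X.bond (ha.trans hl₁) ≫ f'.app (g.idx ν) j' ≫ g.app ν j'
        = X.bond hl₁ ≫ (X.bond ha ≫ f'.app (g.idx ν) j') ≫ g.app ν j' := by
          rw [← X.bond_comp ha hl₁]; simp only [Category.assoc]
      _ = X.bond hl₁ ≫ (X.bond hb ≫ f'.app μ j' ≫ Y.bond hμ) ≫ g.app ν j' := by rw [E2]
      _ = X.bond (hb.trans hl₁) ≫ f'.app μ j' ≫ Y.bond hμ ≫ g.app ν j' := by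
          rw [← X.bond_comp hb hl₁]; simp only [Category.assoc]
      _ = X.bond (hd.trans hl₂) ≫ f'.app μ j' ≫ Y.bond hμ' ≫ g'.app ν j' := by rw [E1]
      _ = X.bond hl₂ ≫ (X.bond hd ≫ f'.app μ j' ≫ Y.bond hμ') ≫ g'.app ν j' := by
          rw [← X.bond_comp hd hl₂]; simp only [Category.assoc]
      _ = X.bond hl₂ ≫ (X.bond hc ≫ f'.app (g'.idx ν) j') ≫ g'.app ν j' := by rw [E3]
      _ = X.bond (hc.trans hl₂) ≫ f'.app (g'.idx ν) j' ≫ g'.app ν j' := by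
          rw [← X.bond_comp hc hl₂]; simp only [Category.assoc]

/-- The hom-set of the enriched pro-category `pro^J-C`. -/
def JHom (J : Type t) [Preorder J] [IsDirected J (· ≤ ·)] [Nonempty J]
    {Λ M : Type w} [Preorder Λ] [IsDirected Λ (· ≤ ·)] [Preorder M]
    (X : InvSys C Λ) (Y : InvSys C M) :=
  Quotient (jmorSetoid J X Y)

/-- Composition in `pro^J-C` (diagrammatic order). -/
def JHom.comp (J : Type t) [Preorder J] [IsDirected J (· ≤ ·)] [Nonempty J]
    {Λ M N : Type w} [Preorder Λ] [IsDirected Λ (· ≤ ·)]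
    [Preorder M] [IsDirected M (· ≤ ·)] [Preorder N]
    {X : InvSys C Λ} {Y : InvSys C M} {Z : InvSys C N}
    (f : JHom J X Y) (g : JHom J Y Z) : JHom J X Z :=
  Quotient.lift₂ (fun f g => (⟦JMor.comp J f g⟧ : JHom J X Z))
    (fun _ _ _ _ hf hg => Quotient.sound (jmorEquiv_comp_congr J hf hg)) f g

/-- The identity morphism of `pro^J-C`. -/
def JHom.id (J : Type t) [Preorder J] [IsDirected J (· ≤ ·)] [Nonempty J]
    {Λ : Type w} [Preorder Λ] [IsDirected Λ (· ≤ ·)]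
    (X : InvSys C Λ) : JHom J X X :=
  ⟦JMor.id J X⟧

/-- `f` is an isomorphism of `pro^J-C`. -/
def IsJIso (J : Type t) [Preorder J] [IsDirected J (· ≤ ·)] [Nonempty J]
    {Λ M : Type w} [Preorder Λ] [IsDirected Λ (· ≤ ·)]
    [Preorder M] [IsDirected M (· ≤ ·)]
    {X : InvSys C Λ} {Y : InvSys C M} (f : JHom J X Y) : Prop :=
  ∃ g : JHom J Y X, JHom.comp J f g = JHom.id J X ∧ JHom.comp J g f = JHom.id J Y

/-- `X` and `Y` are isomorphic objects of `pro^J-C`. -/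
def JIso (J : Type t) [Preorder J] [IsDirected J (· ≤ ·)] [Nonempty J]
    {Λ M : Type w} [Preorder Λ] [IsDirected Λ (· ≤ ·)]
    [Preorder M] [IsDirected M (· ≤ ·)]
    (X : InvSys C Λ) (Y : InvSys C M) : Prop :=
  ∃ f : JHom J X Y, IsJIso J f
/-- The rudimentary inverse system associated with an object `X` of `C`. -/
def rud (X : C) : InvSys C PUnit.{w + 1} where
  obj _ := X
  bond _ := 𝟙 X
  bond_refl _ := rfl
  bond_comp _ _ := Category.id_comp _

/-- The `J`-morphism of rudimentary systems induced by a `C`-morphism `u`. -/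
def constMor (J : Type t) [Preorder J] [Nonempty J] {A B : C} (u : A ⟶ B) :
    JMor J (rud A) (rud B) where
  idx := _root_.id
  app := fun _ _ => u
  cond := by
    intro μ μ' h
    exact ⟨μ', le_refl _, le_refl _, Classical.arbitrary J, fun j _ => by simp [rud]⟩

/-- The projection `J`-morphism `X → (X_l)` of `pro^J-C`. -/
def projMor (J : Type t) [Preorder J] [Nonempty J] {Λ : Type w} [Preorder Λ]
    (X : InvSys C Λ) (l : Λ) : JMor J X (rud (X.obj l)) where
  idx := fun _ => l
  app := fun _ _ => 𝟙 (X.obj l)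
  cond := by
    intro μ μ' h
    exact ⟨l, le_refl _, le_refl _, Classical.arbitrary J, fun j _ => by simp [rud]⟩

/-- The `J`-morphism `X → (Q)` determined by a family `fs : J → (X_l ⟶ Q)`
with the constant index function at `l`. -/
def inducedMor (J : Type t) [Preorder J] [Nonempty J] {Λ : Type w} [Preorder Λ]
    (Xs : InvSys C Λ) {Q : C} (l : Λ) (fs : J → (Xs.obj l ⟶ Q)) :
    JMor J Xs (rud Q) where
  idx := fun _ => l
  app := fun _ j => fs j
  cond := by
    intro μ μ' h
    exact ⟨l, le_refl _, le_refl _, Classical.arbitrary J, fun j _ => by simp [rud]⟩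

/-- The inclusion of pro-morphisms (`J = {1}`, modelled by `PUnit`) into `J`-morphisms,
given by the constant family. -/
def indJMor (J : Type t) [Preorder J] [Nonempty J] {Λ M : Type w} [Preorder Λ] [Preorder M]
    {X : InvSys C Λ} {Y : InvSys C M} (f : JMor PUnit.{w + 1} X Y) : JMor J X Y where
  idx := f.idx
  app := fun μ _ => f.app μ PUnit.unit
  cond := by
    intro μ μ' h
    obtain ⟨l, hl, hl', j, e⟩ := f.cond h
    exact ⟨l, hl, hl', Classical.arbitrary J, fun j' _ => e PUnit.unit (le_refl _)⟩

/-- The inclusion functor `pro-C → pro^J-C` on hom-sets. -/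
def indJHom (J : Type t) [Preorder J] [IsDirected J (· ≤ ·)] [Nonempty J]
    {Λ M : Type w} [Preorder Λ] [IsDirected Λ (· ≤ ·)] [Preorder M]
    {X : InvSys C Λ} {Y : InvSys C M} (f : JHom PUnit.{w + 1} X Y) : JHom J X Y :=
  Quotient.lift (fun f => (⟦indJMor J f⟧ : JHom J X Y))
    (fun f g hfg => Quotient.sound (fun μ => by
      obtain ⟨l, hl, hl', j, e⟩ := hfg μ
      exact ⟨l, hl, hl', Classical.arbitrary J, fun j' _ => e PUnit.unit (le_refl _)⟩)) f

/-- A `D`-expansion of an object `X` of `C` (for a full subcategory given by the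
object class `D`): a pro-morphism `mor : (X) → sys` into an inverse system lying in `D`,
universal among pro-morphisms from `(X)` to inverse systems in `D`. -/
structure Expansion (D : Set C) (X : C) where
  Idx : Type w
  [pre : Preorder Idx]
  [dir : IsDirected Idx (· ≤ ·)]
  [ne : Nonempty Idx]
  sys : InvSys C Idx
  inD : ∀ l, sys.obj l ∈ D
  mor : JHom PUnit.{w + 1} (rud X) sys
  universal : ∀ {M : Type w} [Preorder M] [IsDirected M (· ≤ ·)] [Nonempty M]
    (Y : InvSys C M), (∀ m, Y.obj m ∈ D) →
    ∀ h : JHom PUnit.{w + 1} (rud X) Y,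
      ∃! g : JHom PUnit.{w + 1} sys Y, JHom.comp PUnit.{w + 1} mor g = h

attribute [instance] Expansion.pre Expansion.dir Expansion.ne

/-- STATEMENT 16 (Lemma 9): let `D ⊆ C` be a full pro-reflective subcategory,
`J` a directed partially ordered set, `X, Y ∈ C`, `pX` a `D`-expansion of `X` and
`qY = (q_μ) : Y → 𝒀` a `D`-expansion of `Y`. Let `H = (H_μ) : X → S^J(𝒀)` be a
morphism of `pro-Sh^J_{(C,D)}`, i.e. a family of `J`-shape morphisms
`H_μ : X → Y_μ` (realized in `pro^J-D` via the expansions `pX` and `1 : Y_μ → (Y_μ)`)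
with `H_μ = S^J(q_{μμ'}) ∘ H_{μ'}` for all `μ ≤ μ'` (where `S^J(q_{μμ'})` is the
class of the induced constant `J`-morphism `(Y_{μ'}) → (Y_μ)`). Then there is a
unique morphism `F : X → Y` of `Sh^J_{(C,D)}` with `H_μ = S^J(q_μ) ∘ F` for every
`μ` (where `S^J(q_μ) : 𝒀 → (Y_μ)` is the class of the projection `J`-morphism). -/
theorem continuity_for_D_expansion {C : Type u} [Category.{v} C]
    (D : Set C) (J : Type t) [PartialOrder J] [IsDirected J (· ≤ ·)] [Nonempty J]
    (X Y : C) (pX : Expansion.{w} D X) (qY : Expansion.{w} D Y)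
    (H : ∀ μ : qY.Idx, JHom J pX.sys (rud (qY.sys.obj μ)))
    (hH : ∀ ⦃μ μ' : qY.Idx⦄ (h : μ ≤ μ'),
      H μ = JHom.comp J (H μ') (⟦constMor J (qY.sys.bond h)⟧)) :
    ∃! F : JHom J pX.sys qY.sys,
      ∀ μ : qY.Idx, H μ = JHom.comp J F (⟦projMor J qY.sys μ⟧) := by
  classical
  -- choose representatives of the shape morphisms `H μ`
  set h : ∀ μ : qY.Idx, JMor J pX.sys (rud (qY.sys.obj μ)) := fun μ => (H μ).out with hdef
  have hrep : ∀ μ, (⟦h μ⟧ : JHom J pX.sys (rud (qY.sys.obj μ))) = H μ :=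
    fun μ => Quotient.out_eq _
  have key : ∀ ⦃μ μ' : qY.Idx⦄ (hle : μ ≤ μ'),
      JMorEquiv J pX.sys (rud (qY.sys.obj μ)) (h μ)
        (JMor.comp J (h μ') (constMor J (qY.sys.bond hle))) := by
    intro μ μ' hle
    have e : (⟦h μ⟧ : JHom J pX.sys (rud (qY.sys.obj μ)))
        = JHom.comp J (⟦h μ'⟧) (⟦constMor J (qY.sys.bond hle)⟧) := by
      rw [hrep μ, hrep μ']; exact hH hle
    exact Quotient.exact e
  -- the candidate `J`-morphism
  refine ⟨⟦{ idx := fun μ => (h μ).idx PUnit.unit,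
             app := fun μ j => (h μ).app PUnit.unit j,
             cond := ?_ }⟧, ?_, ?_⟩
  · intro μ μ' hle
    obtain ⟨l, hl, hl', j, e⟩ := key hle PUnit.unit
    refine ⟨l, hl, hl', j, fun j' hj => ?_⟩
    have E := e j' hj
    simp [JMor.comp, constMor, Category.assoc] at E
    exact E
  · -- existence
    intro μ
    rw [← hrep μ]
    apply Quotient.sound
    intro ν
    cases ν
    refine ⟨(h μ).idx PUnit.unit, le_refl _, le_refl _, Classical.arbitrary J,
      fun j' _ => ?_⟩
    simp [JMor.comp, projMor, rud]
  · -- uniqueness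
    intro F' hF'
    rw [← Quotient.out_eq F']
    apply Quotient.sound
    intro μ
    have hE : JMorEquiv J pX.sys (rud (qY.sys.obj μ)) (h μ)
        (JMor.comp J F'.out (projMor J qY.sys μ)) := by
      have e : (⟦h μ⟧ : JHom J pX.sys (rud (qY.sys.obj μ)))
          = JHom.comp J (⟦F'.out⟧) (⟦projMor J qY.sys μ⟧) := by
        rw [hrep μ, Quotient.out_eq F']; exact hF' μ
      exact Quotient.exact e
    obtain ⟨l, hl, hl', j, e⟩ := hE PUnit.unit
    refine ⟨l, hl', hl, j, fun j' hj => ?_⟩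
    have E := e j' hj
    simp only [JMor.comp, projMor, Function.comp, Category.comp_id] at E
    erw [Category.comp_id] at E
    exact E.symm
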